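/- arXiv:1404.6793 — 2 statements merged into one kernel-verified Lean document; each statement's English description precedes it below -/
import Mathlib

section
/- Let L be an m×m Metzler matrix with zero row sums whose associated directed graph is strongly connected, and let p = (p_1,…,p_m)ᵀ be the positive left eigenvector of L for eigenvalue 0, P = diag(p). Let C = diag(c_1,…,c_m) with c_i ∈ {0,1} and at least one c_i = 1, and let κ, ε > 0. Then the symmetric part of P(κL − κεC) is negative definite. -/
open Matrix

lemma pinned_aux_chain_step {m : ℕ} (R : Fin m → Fin m → Prop) (x : Fin m → ℝ) {i j : Fin m}
    (h : Relation.ReflTransGen R i j) (hne : x i ≠ x j) :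
    ∃ a b, R a b ∧ x a ≠ x b := by
  induction h with
  | refl => exact absurd rfl hne
  | @tail b c' hab hbc ih =>
      by_cases hbc' : x b = x c'
      · exact ih (fun h => hne (h.trans hbc'))
      · exact ⟨b, c', hbc, hbc'⟩

lemma pinned_aux_qf_symm (m : ℕ) (M : Matrix (Fin m) (Fin m) ℝ) (x : Fin m → ℝ) :
    x ⬝ᵥ ((1/2:ℝ) • (M + Mᵀ)).mulVec x = x ⬝ᵥ M.mulVec x := by
  have ht : x ⬝ᵥ Mᵀ.mulVec x = x ⬝ᵥ M.mulVec x := by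
    simp only [dotProduct, mulVec, transpose_apply, Finset.mul_sum]
    rw [Finset.sum_comm]
    exact Finset.sum_congr rfl fun i _ => Finset.sum_congr rfl fun j _ => by ring
  rw [smul_mulVec, dotProduct_smul, add_mulVec, dotProduct_add, ht, smul_eq_mul]
  ring

lemma pinned_aux_qf_expand (m : ℕ) (L : Matrix (Fin m) (Fin m) ℝ) (p c : Fin m → ℝ)
    (κ ε : ℝ) (x : Fin m → ℝ) :
    x ⬝ᵥ (Matrix.diagonal p * (κ • L - (κ * ε) • Matrix.diagonal c)).mulVec x
      = κ * (∑ i, ∑ j, x i * (p i * L i j * x j)) - κ * ε * ∑ i, p i * c i * x i ^ 2 := by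
  simp only [mulVec, dotProduct, diagonal_mul, Matrix.sub_apply, Matrix.smul_apply, smul_eq_mul,
    diagonal_apply, mul_ite, mul_zero, ite_mul, zero_mul, Finset.mul_sum]
  rw [← Finset.sum_sub_distrib]
  refine Finset.sum_congr rfl fun i _ => ?_
  have h1 : ∀ j, x i * (p i * (κ * L i j - if i = j then κ * ε * c i else 0) * x j)
      = κ * (x i * (p i * L i j * x j)) - (if i = j then κ * ε * (p i * c i * x i ^ 2) else 0) := by
    intro j
    by_cases h : i = j
    · subst h; simp; ring
    · simp [h]; ring
  rw [Finset.sum_congr rfl fun j _ => h1 j, Finset.sum_sub_distrib]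
  simp [Finset.sum_ite_eq]

lemma pinned_aux_laplacian_id (m : ℕ) (L : Matrix (Fin m) (Fin m) ℝ) (p x : Fin m → ℝ)
    (hrow : ∀ i, ∑ j, L i j = 0) (hpL : p ᵥ* L = 0) :
    ∑ i, ∑ j, x i * (p i * L i j * x j)
      = -(1/2) * ∑ i, ∑ j, p i * L i j * (x i - x j)^2 := by
  have hA : ∑ i, ∑ j, p i * L i j * x i ^ 2 = 0 := by
    refine Finset.sum_eq_zero fun i _ => ?_
    have h : ∑ j, p i * L i j * x i ^ 2 = (∑ j, L i j) * (p i * x i ^ 2) := by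
      rw [Finset.sum_mul]; exact Finset.sum_congr rfl fun j _ => by ring
    rw [h, hrow i, zero_mul]
  have hB : ∑ i, ∑ j, p i * L i j * x j ^ 2 = 0 := by
    rw [Finset.sum_comm]
    refine Finset.sum_eq_zero fun j _ => ?_
    have hj : ∑ i, p i * L i j = 0 := by simpa [vecMul, dotProduct] using congrFun hpL j
    rw [← Finset.sum_mul, hj, zero_mul]
  have expand : ∑ i, ∑ j, p i * L i j * (x i - x j)^2
      = (∑ i, ∑ j, p i * L i j * x i^2) + (∑ i, ∑ j, p i * L i j * x j^2)
        - 2 * ∑ i, ∑ j, x i * (p i * L i j * x j) := by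
    rw [Finset.mul_sum, ← Finset.sum_add_distrib, ← Finset.sum_sub_distrib]
    refine Finset.sum_congr rfl fun i _ => ?_
    rw [Finset.mul_sum, ← Finset.sum_add_distrib, ← Finset.sum_sub_distrib]
    exact Finset.sum_congr rfl fun j _ => by ring
  have h2 : 2 * ∑ i, ∑ j, x i * (p i * L i j * x j)
      = -(∑ i, ∑ j, p i * L i j * (x i - x j)^2) := by
    rw [expand, hA, hB]; ring
  linarith

/-- For a strongly connected Metzler matrix L with zero row sums, positive left null
vector p, P = diag p and a nonzero 0/1 pinning matrix C = diag c, the symmetric part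
of P(κL − κεC) is negative definite. -/
theorem pinned_laplacian_negdef (m : ℕ)
    (L : Matrix (Fin m) (Fin m) ℝ)
    (hMetzler : ∀ i j, i ≠ j → 0 ≤ L i j)
    (hrow : ∀ i, ∑ j, L i j = 0)
    (hconn : ∀ i j : Fin m, Relation.ReflTransGen (fun a b => a ≠ b ∧ 0 < L a b) i j)
    (p : Fin m → ℝ) (hp : ∀ i, 0 < p i) (hpL : p ᵥ* L = 0)
    (c : Fin m → ℝ) (hc : ∀ i, c i = 0 ∨ c i = 1) (hc1 : ∃ i, c i = 1)
    (κ ε : ℝ) (hκ : 0 < κ) (hε : 0 < ε) :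
    ∀ x : Fin m → ℝ, x ≠ 0 →
      x ⬝ᵥ ((1 / 2 : ℝ) •
        (Matrix.diagonal p * (κ • L - (κ * ε) • Matrix.diagonal c) +
          (Matrix.diagonal p * (κ • L - (κ * ε) • Matrix.diagonal c))ᵀ)).mulVec x < 0 := by
  intro x hx
  have hred : x ⬝ᵥ ((1 / 2 : ℝ) •
        (Matrix.diagonal p * (κ • L - (κ * ε) • Matrix.diagonal c) +
          (Matrix.diagonal p * (κ • L - (κ * ε) • Matrix.diagonal c))ᵀ)).mulVec x
      = κ * (-(1/2) * ∑ i, ∑ j, p i * L i j * (x i - x j)^2)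
        - κ * ε * ∑ i, p i * c i * x i ^ 2 := by
    rw [pinned_aux_qf_symm, pinned_aux_qf_expand,
      pinned_aux_laplacian_id m L p x hrow hpL]
  rw [hred]
  set S1 := ∑ i, ∑ j, p i * L i j * (x i - x j)^2 with hS1
  set S2 := ∑ i, p i * c i * x i ^ 2 with hS2
  -- nonnegativity of each summand
  have hterm1 : ∀ i j : Fin m, 0 ≤ p i * L i j * (x i - x j)^2 := by
    intro i j
    rcases eq_or_ne i j with h | h
    · subst h; simp
    · exact mul_nonneg (mul_nonneg (hp i).le (hMetzler i j h)) (sq_nonneg _)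
  have hS1nn : 0 ≤ S1 :=
    Finset.sum_nonneg fun i _ => Finset.sum_nonneg fun j _ => hterm1 i j
  have hterm2 : ∀ i : Fin m, 0 ≤ p i * c i * x i ^ 2 := by
    intro i
    rcases hc i with h | h
    · simp [h]
    · rw [h, mul_one]; exact mul_nonneg (hp i).le (sq_nonneg _)
  have hS2nn : 0 ≤ S2 := Finset.sum_nonneg fun i _ => hterm2 i
  -- strictness
  obtain ⟨i0, hi0⟩ : ∃ i, x i ≠ 0 := by
    by_contra h
    push_neg at h
    exact hx (funext h)
  obtain ⟨k, hk⟩ := hc1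
  have hpos : 0 < S1 ∨ 0 < S2 := by
    by_cases hxk : x k = 0
    · -- x i0 ≠ 0 = x k, follow the chain
      left
      have hne : x i0 ≠ x k := by rw [hxk]; exact hi0
      obtain ⟨a, b, ⟨hab, hLab⟩, hxab⟩ :=
        pinned_aux_chain_step (fun a b => a ≠ b ∧ 0 < L a b) x (hconn i0 k) hne
      have hx2 : 0 < (x a - x b)^2 := by
        have hne' : x a - x b ≠ 0 := sub_ne_zero.mpr hxab
        positivity
      have hab_pos : 0 < p a * L a b * (x a - x b)^2 :=
        mul_pos (mul_pos (hp a) hLab) hx2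
      calc (0:ℝ) < p a * L a b * (x a - x b)^2 := hab_pos
        _ ≤ ∑ j, p a * L a j * (x a - x j)^2 :=
            Finset.single_le_sum (fun j _ => hterm1 a j) (Finset.mem_univ b)
        _ ≤ S1 := Finset.single_le_sum
            (fun i _ => Finset.sum_nonneg fun j _ => hterm1 i j) (Finset.mem_univ a)
    · right
      have hkpos : 0 < p k * c k * x k ^ 2 := by
        rw [hk]; have := hp k; positivity
      exact lt_of_lt_of_le hkpos
        (Finset.single_le_sum (fun i _ => hterm2 i) (Finset.mem_univ k))
  rcases hpos with h | h
  · nlinarith [mul_pos hκ h, mul_nonneg (mul_pos hκ hε).le hS2nn]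
  · nlinarith [mul_nonneg hκ.le hS1nn, mul_pos (mul_pos hκ hε) h]
end

section
/- Let L be an m×m Metzler matrix with zero row sums and strongly connected graph, P = diag(p) with p the positive left null vector of L, C = diag(c) with c ∈ {0,1}ᵐ not identically zero, and α > 0. Then there exist κ > 0 and ε > 0 such that the symmetric part of P(αI_m + κL − κεC) is negative definite. -/
open Matrix

lemma edge_of_ne' {m : ℕ} (r : Fin m → Fin m → Prop) (x : Fin m → ℝ) :
    ∀ i j, Relation.ReflTransGen r i j → x i ≠ x j → ∃ a b, r a b ∧ x a ≠ x b := by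
  intro i j h
  induction h with
  | refl => exact fun h => absurd rfl h
  | @tail b c hab hbc ih =>
    intro hne
    by_cases hxb : x i = x b
    · exact ⟨b, c, hbc, fun h => hne (hxb.trans h)⟩
    · exact ih hxb

lemma lap_identity' {m : ℕ} (M : Matrix (Fin m) (Fin m) ℝ) (x : Fin m → ℝ)
    (hr : ∀ i, ∑ j, M i j = 0) (hcl : ∀ j, ∑ i, M i j = 0) :
    ∑ i, ∑ j, M i j * (x i - x j)^2 = -2 * (x ⬝ᵥ M.mulVec x) := by
  have hdot : x ⬝ᵥ M.mulVec x = ∑ i, ∑ j, x i * (M i j * x j) := by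
    simp [dotProduct, mulVec, Finset.mul_sum]
  have h1 : ∑ i, ∑ j, M i j * (x i)^2 = 0 := by
    simp_rw [← Finset.sum_mul]
    simp [hr]
  have h2 : ∑ i, ∑ j, M i j * (x j)^2 = 0 := by
    rw [Finset.sum_comm]
    have : ∀ j, ∑ i, M i j * (x j)^2 = (∑ i, M i j) * (x j)^2 := fun j => (Finset.sum_mul ..).symm
    simp_rw [this]
    simp [hcl]
  calc ∑ i, ∑ j, M i j * (x i - x j)^2
      = ∑ i, ∑ j, (M i j * (x i)^2 - 2*(x i * (M i j * x j)) + M i j * (x j)^2) := by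
        refine Finset.sum_congr rfl fun i _ => Finset.sum_congr rfl fun j _ => by ring
    _ = (∑ i, ∑ j, M i j * (x i)^2) - 2*(∑ i, ∑ j, x i * (M i j * x j))
          + ∑ i, ∑ j, M i j * (x j)^2 := by
        simp [Finset.sum_add_distrib, Finset.sum_sub_distrib, Finset.mul_sum]
    _ = -2 * (x ⬝ᵥ M.mulVec x) := by rw [h1, h2, hdot]; ring

lemma negdef_bound' {m : ℕ} (hm : m ≠ 0) (N : Matrix (Fin m) (Fin m) ℝ)
    (h : ∀ x : Fin m → ℝ, x ≠ 0 → x ⬝ᵥ N.mulVec x < 0) :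
    ∃ δ > (0:ℝ), ∀ x : Fin m → ℝ, x ⬝ᵥ N.mulVec x ≤ -δ * ∑ i, (x i)^2 := by
  have i0 : Fin m := ⟨0, Nat.pos_of_ne_zero hm⟩
  have hcont : Continuous (fun x : EuclideanSpace ℝ (Fin m) => (x : Fin m → ℝ) ⬝ᵥ N.mulVec x) := by
    simp only [dotProduct, mulVec]
    apply continuous_finset_sum
    intro i _
    exact ((continuous_apply i).comp (EuclideanSpace.equiv (Fin m) ℝ).continuous).mul
      (continuous_finset_sum _ fun j _ =>
        continuous_const.mul ((continuous_apply j).comp (EuclideanSpace.equiv (Fin m) ℝ).continuous))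
  have hx0 : ∃ x : EuclideanSpace ℝ (Fin m), ‖x‖ = 1 :=
    ⟨EuclideanSpace.single i0 1, by simp⟩
  obtain ⟨x₀, hx₀⟩ := hx0
  have hsc : IsCompact (Metric.sphere (0 : EuclideanSpace ℝ (Fin m)) 1) := isCompact_sphere _ _
  obtain ⟨z, hz, hzmax⟩ := hsc.exists_isMaxOn ⟨x₀, by simp [hx₀]⟩ hcont.continuousOn
  have hznorm : ‖z‖ = 1 := by simpa using hz
  have hzne : (z : Fin m → ℝ) ≠ 0 := by
    intro h0
    have : z = 0 := by ext i; simpa using congrFun h0 i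
    rw [this] at hznorm; simp at hznorm
  set δ : ℝ := -((z : Fin m → ℝ) ⬝ᵥ N.mulVec z) with hδdef
  have hδ : 0 < δ := by
    have := h z hzne
    linarith
  refine ⟨δ, hδ, fun x => ?_⟩
  by_cases hx : x = 0
  · subst hx; simp
  · set X : EuclideanSpace ℝ (Fin m) := (EuclideanSpace.equiv (Fin m) ℝ).symm x with hX
    have hXx : (X : Fin m → ℝ) = x := rfl
    have hXne : X ≠ 0 := by
      intro h0
      exact hx (by simp [← hXx, h0])
    set s : ℝ := ‖X‖ with hs
    have hspos : 0 < s := norm_pos_iff.mpr hXne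
    have hssq : s^2 = ∑ i, (x i)^2 := by
      rw [hs, EuclideanSpace.norm_eq]
      rw [Real.sq_sqrt (Finset.sum_nonneg fun i _ => sq_nonneg _)]
      refine Finset.sum_congr rfl fun i _ => ?_
      rw [← hXx, Real.norm_eq_abs, sq_abs]
    set y : EuclideanSpace ℝ (Fin m) := s⁻¹ • X with hy
    have hynorm : ‖y‖ = 1 := by
      rw [hy, norm_smul, Real.norm_eq_abs, abs_of_pos (inv_pos.mpr hspos)]
      field_simp
      exact hs.symm
    have hymem : y ∈ Metric.sphere (0 : EuclideanSpace ℝ (Fin m)) 1 := by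
      simp [Metric.mem_sphere, dist_zero_right, hynorm]
    have hle : (y : Fin m → ℝ) ⬝ᵥ N.mulVec y ≤ -δ := by
      have := hzmax hymem
      simpa [hδdef] using this
    have hqy : (x : Fin m → ℝ) ⬝ᵥ N.mulVec x = s^2 * ((y : Fin m → ℝ) ⬝ᵥ N.mulVec y) := by
      have hyx : (y : Fin m → ℝ) = s⁻¹ • x := by rw [hy, ← hXx]; rfl
      rw [hyx, Matrix.mulVec_smul, dotProduct_smul, smul_dotProduct, smul_eq_mul, smul_eq_mul]
      field_simp
    rw [hqy, ← hssq]
    calc s^2 * ((y : Fin m → ℝ) ⬝ᵥ N.mulVec y) ≤ s^2 * (-δ) :=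
          mul_le_mul_of_nonneg_left hle (sq_nonneg _)
      _ = -δ * s^2 := by ring

/-- There exist κ, ε > 0 such that the symmetric part of P(αI + κL − κεC) is
negative definite, for strongly connected Metzler L with zero row sums. -/
theorem exists_gains_negdef (m : ℕ)
    (L : Matrix (Fin m) (Fin m) ℝ)
    (hMetzler : ∀ i j, i ≠ j → 0 ≤ L i j)
    (hrow : ∀ i, ∑ j, L i j = 0)
    (hconn : ∀ i j : Fin m, Relation.ReflTransGen (fun a b => a ≠ b ∧ 0 < L a b) i j)
    (p : Fin m → ℝ) (hp : ∀ i, 0 < p i) (hpL : p ᵥ* L = 0)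
    (c : Fin m → ℝ) (hc : ∀ i, c i = 0 ∨ c i = 1) (hc1 : ∃ i, c i = 1)
    (α : ℝ) (hα : 0 < α) :
    ∃ κ > (0 : ℝ), ∃ ε > (0 : ℝ),
      ∀ x : Fin m → ℝ, x ≠ 0 →
        x ⬝ᵥ ((1 / 2 : ℝ) •
          (Matrix.diagonal p * (α • (1 : Matrix (Fin m) (Fin m) ℝ) +
              κ • L - (κ * ε) • Matrix.diagonal c) +
            (Matrix.diagonal p * (α • (1 : Matrix (Fin m) (Fin m) ℝ) +
              κ • L - (κ * ε) • Matrix.diagonal c))ᵀ)).mulVec x < 0 := by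
  by_cases hm : m = 0
  · subst hm
    exact ⟨1, one_pos, 1, one_pos, fun x hx => absurd (funext fun i => i.elim0) hx⟩
  -- setup
  haveI hne : Nonempty (Fin m) := ⟨⟨0, Nat.pos_of_ne_zero hm⟩⟩
  set Mm : Matrix (Fin m) (Fin m) ℝ := diagonal p * L + (diagonal p * L)ᵀ with hMm
  set N : Matrix (Fin m) (Fin m) ℝ := (1/2 : ℝ) • Mm - diagonal p * diagonal c with hN
  have hMe : ∀ i j, Mm i j = p i * L i j + p j * L j i := by
    intro i j
    simp [hMm, Matrix.add_apply, Matrix.transpose_apply, Matrix.diagonal_mul]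
    ring
  have hpL' : ∀ j, ∑ i, p i * L i j = 0 := by
    intro j
    have := congrFun hpL j
    simpa [vecMul, dotProduct] using this
  have hMr : ∀ i, ∑ j, Mm i j = 0 := by
    intro i
    simp_rw [hMe]
    rw [Finset.sum_add_distrib, ← Finset.mul_sum, hrow i, mul_zero, zero_add]
    exact hpL' i
  have hMc : ∀ j, ∑ i, Mm i j = 0 := by
    intro j
    simp_rw [hMe]
    rw [Finset.sum_add_distrib, hpL' j, zero_add, ← Finset.mul_sum]
    have : ∀ i, L j i = L j i := fun _ => rfl
    rw [show (∑ i, L j i) = 0 from hrow j, mul_zero]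
  have hterm : ∀ (x : Fin m → ℝ) i j, 0 ≤ Mm i j * (x i - x j)^2 := by
    intro x i j
    by_cases hij : i = j
    · subst hij; simp
    · apply mul_nonneg _ (sq_nonneg _)
      rw [hMe]
      exact add_nonneg (mul_nonneg (hp i).le (hMetzler i j hij))
        (mul_nonneg (hp j).le (hMetzler j i (Ne.symm hij)))
  have hcnn : ∀ i, 0 ≤ c i := by
    intro i; rcases hc i with h | h <;> rw [h] <;> norm_num
  have hqdiag : ∀ (d x : Fin m → ℝ), x ⬝ᵥ (diagonal d).mulVec x = ∑ i, d i * (x i)^2 := by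
    intro d x
    simp only [dotProduct, mulVec_diagonal]
    exact Finset.sum_congr rfl fun i _ => by ring
  have hNq : ∀ x : Fin m → ℝ,
      x ⬝ᵥ N.mulVec x = (1/2) * (x ⬝ᵥ Mm.mulVec x) - ∑ i, p i * c i * (x i)^2 := by
    intro x
    rw [hN, Matrix.sub_mulVec, dotProduct_sub, Matrix.smul_mulVec, dotProduct_smul,
      smul_eq_mul, Matrix.diagonal_mul_diagonal, hqdiag]
  -- negativity of N
  have key : ∀ x : Fin m → ℝ, x ≠ 0 → x ⬝ᵥ N.mulVec x < 0 := by
    intro x hx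
    have hT := lap_identity' Mm x hMr hMc
    have hTnn : 0 ≤ ∑ i, ∑ j, Mm i j * (x i - x j)^2 :=
      Finset.sum_nonneg fun i _ => Finset.sum_nonneg fun j _ => hterm x i j
    have hMq : x ⬝ᵥ Mm.mulVec x ≤ 0 := by linarith
    have hhnn : 0 ≤ ∑ i, p i * c i * (x i)^2 :=
      Finset.sum_nonneg fun i _ => mul_nonneg (mul_nonneg (hp i).le (hcnn i)) (sq_nonneg _)
    rw [hNq]
    by_cases hconst : ∀ i j : Fin m, x i = x j
    · -- x constant nonzero: the C-term is strictly positive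
      obtain ⟨i0, hi0⟩ := Function.ne_iff.mp hx
      obtain ⟨i1, hi1⟩ := hc1
      have hxi1 : x i1 ≠ 0 := by
        rw [hconst i1 i0]; exact hi0
      have hpos : 0 < ∑ i, p i * c i * (x i)^2 := by
        refine Finset.sum_pos' (fun i _ => mul_nonneg (mul_nonneg (hp i).le (hcnn i)) (sq_nonneg _))
          ⟨i1, Finset.mem_univ _, ?_⟩
        rw [hi1, mul_one]
        exact mul_pos (hp i1) (lt_of_le_of_ne (sq_nonneg _) (Ne.symm (pow_ne_zero 2 hxi1)))
      linarith
    · -- x nonconstant: the Laplacian term is strictly negative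
      push_neg at hconst
      obtain ⟨i, j, hij⟩ := hconst
      obtain ⟨a, b, ⟨hab, hLab⟩, hxab⟩ := edge_of_ne' _ x i j (hconn i j) hij
      have habpos : 0 < Mm a b * (x a - x b)^2 := by
        apply mul_pos
        · rw [hMe]
          have : 0 < p a * L a b := mul_pos (hp a) hLab
          have h2 : 0 ≤ p b * L b a := mul_nonneg (hp b).le (hMetzler b a (Ne.symm hab))
          linarith
        · exact lt_of_le_of_ne (sq_nonneg _) (Ne.symm (pow_ne_zero 2 (sub_ne_zero.mpr hxab)))
      have hTpos : 0 < ∑ i, ∑ j, Mm i j * (x i - x j)^2 := by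
        refine Finset.sum_pos' (fun i _ => Finset.sum_nonneg fun j _ => hterm x i j)
          ⟨a, Finset.mem_univ _, ?_⟩
        exact Finset.sum_pos' (fun j _ => hterm x a j) ⟨b, Finset.mem_univ _, habpos⟩
      have : x ⬝ᵥ Mm.mulVec x < 0 := by linarith
      linarith
  -- quantitative bound
  obtain ⟨δ, hδ, hbound⟩ := negdef_bound' hm N key
  set sp : ℝ := ∑ i, p i with hsp
  have hsppos : 0 < sp := Finset.sum_pos (fun i _ => hp i) Finset.univ_nonempty
  set κ : ℝ := α * sp / δ + 1 with hκdef
  have hκ : 0 < κ := by positivity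
  refine ⟨κ, hκ, 1, one_pos, fun x hx => ?_⟩
  -- matrix identity
  have hA : Matrix.diagonal p * (α • (1 : Matrix (Fin m) (Fin m) ℝ) +
      κ • L - (κ * 1) • Matrix.diagonal c)
      = α • diagonal p + κ • (diagonal p * L) - κ • (diagonal p * diagonal c) := by
    simp only [Matrix.mul_sub, Matrix.mul_add, Matrix.mul_smul, Matrix.mul_one, mul_one]
  have hmat : ((1 / 2 : ℝ) •
      (Matrix.diagonal p * (α • (1 : Matrix (Fin m) (Fin m) ℝ) +
          κ • L - (κ * 1) • Matrix.diagonal c) +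
        (Matrix.diagonal p * (α • (1 : Matrix (Fin m) (Fin m) ℝ) +
          κ • L - (κ * 1) • Matrix.diagonal c))ᵀ)) = α • diagonal p + κ • N := by
    rw [hA, hN, hMm]
    ext i j
    simp only [Matrix.transpose_apply, Matrix.add_apply, Matrix.sub_apply, Matrix.smul_apply,
      smul_eq_mul, Matrix.diagonal_apply]
    by_cases hij : i = j
    · subst hij; simp; ring
    · simp [hij, Ne.symm hij]
      ring
  rw [hmat]
  -- quadratic form expansion
  have hexp : x ⬝ᵥ (α • diagonal p + κ • N).mulVec x
      = α * (∑ i, p i * (x i)^2) + κ * (x ⬝ᵥ N.mulVec x) := by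
    rw [Matrix.add_mulVec, dotProduct_add, Matrix.smul_mulVec, Matrix.smul_mulVec,
      dotProduct_smul, dotProduct_smul, smul_eq_mul, smul_eq_mul, hqdiag]
  rw [hexp]
  -- bounds
  set s : ℝ := ∑ i, (x i)^2 with hsdef
  have hspos : 0 < s := by
    obtain ⟨i0, hi0⟩ := Function.ne_iff.mp hx
    exact Finset.sum_pos' (fun i _ => sq_nonneg _)
      ⟨i0, Finset.mem_univ _, lt_of_le_of_ne (sq_nonneg _) (Ne.symm (pow_ne_zero 2 hi0))⟩
  have hpb : ∑ i, p i * (x i)^2 ≤ sp * s := by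
    rw [hsdef, Finset.mul_sum]
    refine Finset.sum_le_sum fun i _ => ?_
    exact mul_le_mul_of_nonneg_right
      (Finset.single_le_sum (fun i _ => (hp i).le) (Finset.mem_univ i)) (sq_nonneg _)
  have hNb : κ * (x ⬝ᵥ N.mulVec x) ≤ κ * (-δ * s) :=
    mul_le_mul_of_nonneg_left (hbound x) hκ.le
  have hκδ : κ * δ = α * sp + δ := by
    rw [hκdef]
    field_simp
  have hfinal : α * (sp * s) + κ * (-δ * s) = -(δ * s) := by
    linear_combination (-s) * hκδ
  have : α * (∑ i, p i * (x i)^2) + κ * (x ⬝ᵥ N.mulVec x) ≤ α * (sp * s) + κ * (-δ * s) := by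
    have h1 : α * (∑ i, p i * (x i)^2) ≤ α * (sp * s) :=
      mul_le_mul_of_nonneg_left hpb hα.le
    linarith
  rw [hfinal] at this
  have : α * (∑ i, p i * (x i)^2) + κ * (x ⬝ᵥ N.mulVec x) < 0 := by
    have := mul_pos hδ hspos
    linarith
  exact this
end
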